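/- Let δ_1, …, δ_M be real numbers with δ_m > 0 for every m and Σ_{m=1}^M δ_m = 1, let P_1, …, P_M ≥ 0 with P̄ := Σ_{m=1}^M δ_m P_m > 0, let α ∈ ℂ and τ > 0, and define ν_m := δ_m · (|α|² P_m / P̄ + τ) / (|α|² + τ) for each m (so each ν_m > 0). Then Σ_{m=1}^M δ_m · log(1 + |α|² P_m / (τ P̄)) = log(1 + |α|²/τ) − Σ_{m=1}^M δ_m · log(δ_m / ν_m). -/

import Mathlib

open Finset Real

/-- The noise-free linear achievable rate equals the flat-allocation rate
minus the KL divergence `D(δ‖ν)` between the bandwidth fractions and the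
transmitted power fractions. -/
theorem rate_no_noise (M : ℕ) (δ : Fin M → ℝ) (hδ : ∀ m, 0 < δ m)
    (hδsum : ∑ m, δ m = 1) (P : Fin M → ℝ) (hP : ∀ m, 0 ≤ P m)
    (Pbar : ℝ) (hPbar : Pbar = ∑ m, δ m * P m) (hPbar_pos : 0 < Pbar)
    (α : ℂ) (τ : ℝ) (hτ : 0 < τ) (ν : Fin M → ℝ)
    (hν : ∀ m, ν m = δ m * ((‖α‖ ^ 2 * P m / Pbar + τ) / (‖α‖ ^ 2 + τ))) :
    ∑ m, δ m * Real.log (1 + ‖α‖ ^ 2 * P m / (τ * Pbar)) =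
      Real.log (1 + ‖α‖ ^ 2 / τ) - ∑ m, δ m * Real.log (δ m / ν m) := by
  set a := ‖α‖ ^ 2 with ha_def
  have ha : 0 ≤ a := sq_nonneg _
  have haτ : 0 < a + τ := by positivity
  have hx : ∀ m, 0 < a * P m / Pbar + τ := fun m =>
    add_pos_of_nonneg_of_pos (div_nonneg (mul_nonneg ha (hP m)) hPbar_pos.le) hτ
  have h1 : ∀ m, 1 + a * P m / (τ * Pbar) = (a * P m / Pbar + τ) / τ := by
    intro m
    field_simp
    ring
  have h2 : ∀ m, δ m / ν m = (a + τ) / (a * P m / Pbar + τ) := by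
    intro m
    rw [hν m]
    field_simp [(hδ m).ne', (hx m).ne']
  have h3 : (1 : ℝ) + a / τ = (a + τ) / τ := by field_simp; ring
  simp_rw [h1, h2, h3, Real.log_div haτ.ne' hτ.ne',
    fun m => Real.log_div haτ.ne' (hx m).ne',
    fun m => Real.log_div (hx m).ne' hτ.ne', mul_sub]
  rw [Finset.sum_sub_distrib, Finset.sum_sub_distrib, ← Finset.sum_mul, ← Finset.sum_mul, hδsum, one_mul]
  ring
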